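/- There is an absolute constant c > 0 with the following property. Let G be a finite simple undirected graph on vertex set V, let 𝒞 be a family of pairwise disjoint subsets of V (clusters), and let 𝒮 be a family of paths in G; call a cluster clean if it shares no vertex with any path in 𝒮. Let d, m, k be positive integers and let ρ be a shortest u–v path in G such that: (i) every path in 𝒮 that meets ρ does so in a contiguous subpath of ρ; (ii) no contiguous subpath P of ρ simultaneously has length at most d, shares a vertex with at most m of the paths in 𝒮, and intersects exactly m clean clusters; (iii) ρ intersects exactly k clean clusters, with k ≥ m; and (iv) ρ shares a vertex with fewer than k/2 of the paths in 𝒮. Then δ_G(u,v) ≥ c·k·d/m. -/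

import Mathlib

lemma aux_mem {V : Type} [DecidableEq V] {t1 l t2 L : List V}
    (h : L = t1 ++ (l ++ t2)) (hnd : L.Nodup) (x : V) :
    x ∈ l ↔ x ∈ L ∧ t1.length ≤ L.idxOf x ∧ L.idxOf x < t1.length + l.length := by
  subst h
  rw [List.nodup_append] at hnd
  obtain ⟨h1, h2, hdisj⟩ := hnd
  rw [List.nodup_append] at h2
  obtain ⟨hl, ht2, hdisj2⟩ := h2
  constructor
  · intro hx
    have hx1 : x ∉ t1 := fun hxt => hdisj x hxt x (List.mem_append_left _ hx) rfl
    have e1 : (t1 ++ (l ++ t2)).idxOf x = t1.length + (l ++ t2).idxOf x :=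
      List.idxOf_append_of_notMem hx1
    have e2 : (l ++ t2).idxOf x = l.idxOf x := List.idxOf_append_of_mem hx
    have e3 : l.idxOf x < l.length := List.idxOf_lt_length_iff.2 hx
    refine ⟨by simp [hx], ?_, ?_⟩ <;> omega
  · rintro ⟨hxL, hge, hlt⟩
    rcases List.mem_append.1 hxL with hx1 | hx23
    · exfalso
      have e1 : (t1 ++ (l ++ t2)).idxOf x = t1.idxOf x := List.idxOf_append_of_mem hx1
      have e3 : t1.idxOf x < t1.length := List.idxOf_lt_length_iff.2 hx1
      omega
    rcases List.mem_append.1 hx23 with hx2 | hx3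
    · exact hx2
    · exfalso
      have hx1 : x ∉ t1 := fun hxt => hdisj x hxt x (List.mem_append_right _ hx3) rfl
      have hx2 : x ∉ l := fun hxl => hdisj2 x hxl x hx3 rfl
      have e1 : (t1 ++ (l ++ t2)).idxOf x = t1.length + (l ++ t2).idxOf x :=
        List.idxOf_append_of_notMem hx1
      have e2 : (l ++ t2).idxOf x = l.length + t2.idxOf x :=
        List.idxOf_append_of_notMem hx2
      omega


lemma rec_lemma (n d m : ℕ) (hm : 0 < m)
    {ι : Type} (T : Finset ι) (pp qq : ι → ℕ)
    (𝒦 : Finset (Finset ℕ))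
    (hKne : ∀ A ∈ 𝒦, A.Nonempty)
    (hKsub : ∀ A ∈ 𝒦, ∀ i ∈ A, i ≤ n)
    (hKdisj : ∀ A ∈ 𝒦, ∀ B ∈ 𝒦, A ≠ B → Disjoint A B)
    (hIclean : ∀ S ∈ T, ∀ A ∈ 𝒦, ∀ i ∈ A, ¬(pp S ≤ i ∧ i ≤ qq S))
    (hii : ∀ a b : ℕ, a ≤ b → b ≤ n → b - a ≤ d →
       (𝒦.filter fun A => ∃ i ∈ A, a ≤ i ∧ i ≤ b).card = m →
       m + 1 ≤ (T.filter fun S => pp S ≤ b ∧ a ≤ qq S).card) :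
    ∀ κ : ℕ, ∀ (a : ℕ) (R : Finset (Finset ℕ)), R.card ≤ κ → R ⊆ 𝒦 →
    (∀ A ∈ R, ∀ i ∈ A, a ≤ i) → a ≤ n + 1 →
    (R.Nonempty → ∃ A ∈ R, a ∈ A) →
    ∃ g b : ℕ, R.card ≤ m * (g + b) + (m - 1) ∧
      a + (d + 1) * g ≤ n + 1 ∧
      (m + 1) * b ≤ (T.filter fun S => a ≤ qq S).card := by
  classical
  intro κ
  induction κ with
  | zero =>
    intro a R hcard _ _ ha _
    refine ⟨0, 0, ?_, by simpa using ha, by simp⟩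
    simp at hcard
    simp [hcard]
  | succ κ ih =>
    intro a R hcard hsub hlow ha hmem
    by_cases hsmall : R.card < m
    · exact ⟨0, 0, by omega, by simpa using ha, by simp⟩
    push_neg at hsmall
    have hRne : R.Nonempty := Finset.card_pos.1 (lt_of_lt_of_le hm hsmall)
    -- the counting function
    set cnt : ℕ → ℕ := fun b => (𝒦.filter fun A => ∃ i ∈ A, a ≤ i ∧ i ≤ b).card with hcnt
    have hcntn : m ≤ cnt n := by
      refine le_trans hsmall (Finset.card_le_card ?_)
      intro A hA
      rw [Finset.mem_filter]
      obtain ⟨i, hi⟩ := hKne A (hsub hA)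
      exact ⟨hsub hA, i, hi, hlow A hA i hi, hKsub A (hsub hA) i hi⟩
    have hone : ∀ b : ℕ, (𝒦.filter fun A => b ∈ A).card ≤ 1 := by
      intro b
      refine Finset.card_le_one.2 ?_
      intro A hA B hB
      rw [Finset.mem_filter] at hA hB
      by_contra hne
      exact Finset.disjoint_left.1 (hKdisj A hA.1 B hB.1 hne) hA.2 hB.2
    have hstep : ∀ x : ℕ, cnt (x + 1) ≤ cnt x + 1 := by
      intro x
      have hsub2 : (𝒦.filter fun A => ∃ i ∈ A, a ≤ i ∧ i ≤ x + 1)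
          ⊆ (𝒦.filter fun A => ∃ i ∈ A, a ≤ i ∧ i ≤ x) ∪ (𝒦.filter fun A => x + 1 ∈ A) := by
        intro A hA
        rw [Finset.mem_filter] at hA
        obtain ⟨hA1, i, hi, hai, hix⟩ := hA
        rcases Nat.lt_or_ge i (x + 1) with h | h
        · exact Finset.mem_union_left _ (Finset.mem_filter.2 ⟨hA1, i, hi, hai, by omega⟩)
        · have : i = x + 1 := by omega
          exact Finset.mem_union_right _ (Finset.mem_filter.2 ⟨hA1, this ▸ hi⟩)
      calc cnt (x + 1) ≤ _ := Finset.card_le_card hsub2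
        _ ≤ cnt x + (𝒦.filter fun A => x + 1 ∈ A).card := Finset.card_union_le _ _
        _ ≤ cnt x + 1 := by have := hone (x + 1); omega
    have hlow0 : ∀ b : ℕ, b < a → cnt b = 0 := by
      intro b hb
      rw [hcnt]
      rw [Finset.card_eq_zero, Finset.filter_eq_empty_iff]
      intro A _
      rintro ⟨i, _, h1, h2⟩
      omega
    -- find the window end `e`
    have hex : ∃ b : ℕ, m ≤ cnt b := ⟨n, hcntn⟩
    set e := Nat.find hex with he
    have hecnt : m ≤ cnt e := Nat.find_spec hex
    have hemin : ∀ b : ℕ, b < e → cnt b < m := fun b hb => by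
      have := Nat.find_min hex hb; omega
    have hen : e ≤ n := Nat.find_min' hex hcntn
    have hae : a ≤ e := by
      by_contra hlt
      push_neg at hlt
      rw [hlow0 e hlt] at hecnt
      omega
    have hwin : cnt e = m := by
      rcases Nat.eq_zero_or_pos e with h0 | hpos
      · have ha0 : a = 0 := by omega
        have : cnt 0 ≤ 1 := by
          refine le_trans (Finset.card_le_card ?_) (hone 0)
          intro A hA
          rw [Finset.mem_filter] at hA ⊢
          obtain ⟨h1, i, hi, _, hi0⟩ := hA
          exact ⟨h1, by rwa [Nat.le_zero.1 hi0] at hi⟩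
        rw [h0] at hecnt ⊢
        omega
      · obtain ⟨x, hx⟩ := Nat.exists_eq_succ_of_ne_zero (Nat.pos_iff_ne_zero.1 hpos)
        rw [Nat.succ_eq_add_one] at hx
        have h1 := hemin x (by omega)
        have h2 := hstep x
        rw [hx] at hecnt ⊢
        omega
    -- remaining clusters
    set R' := R.filter (fun A => ∀ i ∈ A, e < i) with hR'
    have hcards : R.card ≤ R'.card + m := by
      have hsub3 : R.filter (fun A => ¬ ∀ i ∈ A, e < i)
          ⊆ 𝒦.filter fun A => ∃ i ∈ A, a ≤ i ∧ i ≤ e := by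
        intro A hA
        rw [Finset.mem_filter] at hA ⊢
        push_neg at hA
        obtain ⟨hAR, i, hi, hie⟩ := hA
        exact ⟨hsub hAR, i, hi, hlow A hAR i hi, by omega⟩
      have h4 := Finset.card_le_card hsub3
      have hwinU : (𝒦.filter fun A => ∃ i ∈ A, a ≤ i ∧ i ≤ e).card = m := hwin
      have h5 := Finset.card_filter_add_card_filter_not
        (s := R) (p := fun A => ∀ i ∈ A, e < i)
      have hR'c : R'.card = (R.filter (fun A => ∀ i ∈ A, e < i)).card := rfl
      omega
    have hdropc : R'.card < R.card := by
      obtain ⟨A₀, hA₀R, hA₀a⟩ := hmem hRne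
      refine Finset.card_lt_card ⟨Finset.filter_subset _ _, fun hss => ?_⟩
      have : A₀ ∈ R' := hss hA₀R
      rw [hR', Finset.mem_filter] at this
      have := this.2 a hA₀a
      omega
    by_cases hR'ne : R'.Nonempty
    · -- recurse
      set U := R'.sup id with hU
      have hUne : U.Nonempty := by
        obtain ⟨A, hA⟩ := hR'ne
        obtain ⟨i, hi⟩ := hKne A (hsub (Finset.filter_subset _ _ hA))
        exact ⟨i, Finset.mem_sup.2 ⟨A, hA, hi⟩⟩
      set a' := U.min' hUne with ha'
      obtain ⟨B, hBR', hBa'⟩ := Finset.mem_sup.1 (U.min'_mem hUne)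
      have hBK : B ∈ 𝒦 := hsub (Finset.filter_subset _ _ hBR')
      have ha'low : ∀ A ∈ R', ∀ i ∈ A, a' ≤ i := by
        intro A hA i hi
        exact Finset.min'_le _ _ (Finset.mem_sup.2 ⟨A, hA, hi⟩)
      have hea' : e < a' := (Finset.mem_filter.1 hBR').2 a' hBa'
      have ha'n : a' ≤ n := hKsub B hBK a' hBa'
      obtain ⟨g', b', hc', hp', hs'⟩ := ih a' R' (by omega)
        (fun A hA => hsub (Finset.filter_subset _ _ hA)) ha'low (by omega)
        (fun _ => ⟨B, hBR', hBa'⟩)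
      have hmono : (T.filter fun S => a' ≤ qq S) ⊆ (T.filter fun S => a ≤ qq S) := by
        intro S hS
        rw [Finset.mem_filter] at hS ⊢
        exact ⟨hS.1, by omega⟩
      by_cases hlen : e - a ≤ d
      · -- bad window
        refine ⟨g', b' + 1, ?_, by omega, ?_⟩
        · have hh : m * (g' + (b' + 1)) = m * (g' + b') + m := by ring
          omega
        have hstrip := hii a e hae hen hlen hwin
        set W := T.filter fun S => pp S ≤ e ∧ a ≤ qq S with hW
        have hdisjW : Disjoint W (T.filter fun S => a' ≤ qq S) := by
          rw [Finset.disjoint_left]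
          intro S hSW hSF
          rw [Finset.mem_filter] at hSW hSF
          exact hIclean S hSW.1 B hBK a' hBa' ⟨by omega, hSF.2⟩
        have hsub4 : W ∪ (T.filter fun S => a' ≤ qq S) ⊆ T.filter fun S => a ≤ qq S := by
          intro S hS
          rcases Finset.mem_union.1 hS with h | h
          · rw [Finset.mem_filter] at h ⊢
            exact ⟨h.1, h.2.2⟩
          · exact hmono h
        have hcard4 := Finset.card_le_card hsub4
        rw [Finset.card_union_of_disjoint hdisjW] at hcard4
        have : (m + 1) * (b' + 1) = (m + 1) * b' + (m + 1) := by ring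
        omega
      · -- good window
        refine ⟨g' + 1, b', ?_, ?_, le_trans hs' (Finset.card_le_card hmono)⟩
        · have hh : m * (g' + 1 + b') = m * (g' + b') + m := by ring
          omega
        · have hh : a + (d + 1) * (g' + 1) = (a + (d + 1)) + (d + 1) * g' := by ring
          push_neg at hlen
          omega
    · -- R' empty : directly one window
      rw [Finset.not_nonempty_iff_eq_empty] at hR'ne
      have hRm : R.card ≤ m := by rw [hR'ne] at hcards; simpa using hcards
      by_cases hlen : e - a ≤ d
      · -- bad window
        refine ⟨0, 1, by omega, by simpa using ha, ?_⟩
        have hstrip := hii a e hae hen hlen hwin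
        have hsub5 : (T.filter fun S => pp S ≤ e ∧ a ≤ qq S) ⊆ T.filter fun S => a ≤ qq S := by
          intro S hS
          rw [Finset.mem_filter] at hS ⊢
          exact ⟨hS.1, hS.2.2⟩
        have := Finset.card_le_card hsub5
        omega
      · -- good window
        exact ⟨1, 0, by omega, by omega, by simp⟩

lemma core_lemma (n d m : ℕ) (hd : 0 < d) (hm : 0 < m)
    {ι : Type} (T : Finset ι) (pp qq : ι → ℕ)
    (𝒦 : Finset (Finset ℕ))
    (hKne : ∀ A ∈ 𝒦, A.Nonempty)
    (hKsub : ∀ A ∈ 𝒦, ∀ i ∈ A, i ≤ n)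
    (hKdisj : ∀ A ∈ 𝒦, ∀ B ∈ 𝒦, A ≠ B → Disjoint A B)
    (hIclean : ∀ S ∈ T, ∀ A ∈ 𝒦, ∀ i ∈ A, ¬(pp S ≤ i ∧ i ≤ qq S))
    (hii : ∀ a b : ℕ, a ≤ b → b ≤ n → b - a ≤ d →
       (𝒦.filter fun A => ∃ i ∈ A, a ≤ i ∧ i ≤ b).card = m →
       m + 1 ≤ (T.filter fun S => pp S ≤ b ∧ a ≤ qq S).card)
    (hmk : m ≤ 𝒦.card)
    (hs : 2 * T.card < 𝒦.card) :
    𝒦.card * d ≤ 4 * m * n := by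
  classical
  have hKne' : 𝒦.Nonempty := Finset.card_pos.1 (lt_of_lt_of_le hm hmk)
  set U := 𝒦.sup id with hU
  have hUne : U.Nonempty := by
    obtain ⟨A, hA⟩ := hKne'
    obtain ⟨i, hi⟩ := hKne A hA
    exact ⟨i, Finset.mem_sup.2 ⟨A, hA, hi⟩⟩
  set a₀ := U.min' hUne with ha₀
  obtain ⟨B, hB, hBa⟩ := Finset.mem_sup.1 (U.min'_mem hUne)
  have hlow : ∀ A ∈ 𝒦, ∀ i ∈ A, a₀ ≤ i := fun A hA i hi =>
    Finset.min'_le _ _ (Finset.mem_sup.2 ⟨A, hA, hi⟩)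
  have ha₀n : a₀ ≤ n := hKsub B hB a₀ hBa
  obtain ⟨g, b, hc, hp, hstr⟩ := rec_lemma n d m hm T pp qq 𝒦 hKne hKsub hKdisj hIclean hii
    𝒦.card a₀ 𝒦 le_rfl Finset.Subset.rfl hlow (by omega) (fun _ => ⟨B, hB, hBa⟩)
  have hstr' : (m + 1) * b ≤ T.card :=
    le_trans hstr (Finset.card_le_card (Finset.filter_subset _ _))
  -- g ≥ 1
  have hg : 1 ≤ g := by
    by_contra hg0
    push_neg at hg0
    interval_cases g
    rcases Nat.eq_zero_or_pos b with hb0 | hb1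
    · subst hb0
      simp at hc
      omega
    · have hBm : m ≤ m * b := Nat.le_mul_of_pos_right m hb1
      have h1 : m * (0 + b) = m * b := by ring
      have h2 : (m + 1) * b = m * b + b := by ring
      omega
  -- k ≤ 4 * (m * g)
  have h4 : 𝒦.card ≤ 4 * (m * g) := by
    have h1 : m * (g + b) = m * g + m * b := by ring
    have h2 : (m + 1) * b = m * b + b := by ring
    have h3 : m ≤ m * g := Nat.le_mul_of_pos_right m hg
    omega
  have h5 : g * d ≤ n := by
    have h1 : (d + 1) * g = g * d + g := by ring
    omega
  calc 𝒦.card * d ≤ (4 * (m * g)) * d := Nat.mul_le_mul_right d h4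
    _ = 4 * m * (g * d) := by ring
    _ ≤ 4 * m * n := Nat.mul_le_mul_left _ h5

/-- Strip-length lemma: there is an absolute constant `c₀ > 0` such that any shortest
path that could not have a further strip extracted from it (condition (ii)), meets
exactly `k ≥ m` clean clusters and fewer than `k/2` strips, must have length at least
`c₀·k·d/m`. -/
theorem strip_length_bound :
    ∃ c₀ : ℝ, 0 < c₀ ∧
      ∀ (V : Type) [Fintype V], ∀ (G : SimpleGraph V) (𝒞 : Set (Set V))
        (𝒮 : Set ((a : V) × (b : V) × G.Walk a b)) (d m k : ℕ),
        𝒞.PairwiseDisjoint id →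
        𝒮.Finite →
        0 < d → 0 < m → 0 < k →
        ∀ (u v : V) (ρ : G.Walk u v), ρ.length = G.dist u v →
        -- (i) every strip meeting `ρ` does so in a contiguous subpath of `ρ`
        (∀ S ∈ 𝒮, (∃ x : V, x ∈ S.2.2.support ∧ x ∈ ρ.support) →
          ∃ l : List V, l ≠ [] ∧ l <:+: ρ.support ∧
            ∀ x : V, (x ∈ S.2.2.support ∧ x ∈ ρ.support) ↔ x ∈ l) →
        -- (ii) no contiguous subpath of `ρ` of length at most `d` meets at most `m`
        -- strips while intersecting exactly `m` clean clusters
        (¬ ∃ l : List V, l ≠ [] ∧ l <:+: ρ.support ∧ l.length - 1 ≤ d ∧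
          {S ∈ 𝒮 | ∃ x : V, x ∈ S.2.2.support ∧ x ∈ l}.ncard ≤ m ∧
          {C ∈ 𝒞 | (∀ S ∈ 𝒮, ∀ x ∈ C, x ∉ S.2.2.support) ∧
            ∃ x ∈ C, x ∈ l}.ncard = m) →
        -- (iii) `ρ` intersects exactly `k ≥ m` clean clusters
        {C ∈ 𝒞 | (∀ S ∈ 𝒮, ∀ x ∈ C, x ∉ S.2.2.support) ∧
          ∃ x ∈ C, x ∈ ρ.support}.ncard = k →
        m ≤ k →
        -- (iv) `ρ` meets fewer than `k/2` strips
        2 * {S ∈ 𝒮 | ∃ x : V, x ∈ S.2.2.support ∧ x ∈ ρ.support}.ncard < k →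
        c₀ * k * d / m ≤ (G.dist u v : ℝ) := by
  refine ⟨1/4, by norm_num, ?_⟩
  intro V _ G 𝒞 𝒮 d m k h𝒞 h𝒮 hd hm hk u v ρ hρ h1 h2 h3 hmk h4
  classical
  set L := ρ.support with hL
  have hpath : ρ.IsPath := ρ.isPath_of_length_eq_dist hρ
  have hnd : L.Nodup := hpath.support_nodup
  set n := ρ.length with hn
  have hLlen : L.length = n + 1 := ρ.length_support
  -- index machinery
  set f : ℕ → V := fun i => if h : i < L.length then L.get ⟨i, h⟩ else u with hf
  have hfi : ∀ x ∈ L, f (L.idxOf x) = x := by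
    intro x hx
    have h := List.idxOf_lt_length_iff.2 hx
    simp only [hf, dif_pos h]
    exact List.idxOf_get h
  have hif : ∀ i, i < L.length → L.idxOf (f i) = i := by
    intro i h
    simp only [hf, dif_pos h, List.get_eq_getElem]
    simp [hnd]
  have hfmem : ∀ i, i < L.length → f i ∈ L := by
    intro i h
    simp only [hf, dif_pos h]
    exact L.get_mem _
  -- clean clusters
  set CS : Set (Set V) := {C ∈ 𝒞 | (∀ S ∈ 𝒮, ∀ x ∈ C, x ∉ S.2.2.support) ∧
      ∃ x ∈ C, x ∈ ρ.support} with hCS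
  have hCSfin : CS.Finite := by
    by_contra hinf
    rw [Set.Infinite.ncard hinf] at h3
    omega
  set CF := hCSfin.toFinset with hCF
  have hCFcard : CF.card = k := by
    rw [← h3, hCF]
    exact (Set.ncard_eq_toFinset_card _ hCSfin).symm
  have hCFmem : ∀ C, C ∈ CF ↔ C ∈ 𝒞 ∧ (∀ S ∈ 𝒮, ∀ x ∈ C, x ∉ S.2.2.support) ∧
      ∃ x ∈ C, x ∈ L := by
    intro C
    rw [hCF, Set.Finite.mem_toFinset]
    exact Iff.rfl
  set AC : Set V → Finset ℕ := fun C => (Finset.range L.length).filter (fun i => f i ∈ C)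
    with hAC
  have hACmem : ∀ C i, i ∈ AC C ↔ i < L.length ∧ f i ∈ C := by
    intro C i; rw [hAC]; simp [Finset.mem_filter, Finset.mem_range]
  have hidxAC : ∀ (C : Set V) (x : V), x ∈ L → x ∈ C → L.idxOf x ∈ AC C := by
    intro C x hxL hxC
    rw [hACmem]
    have h := List.idxOf_lt_length_iff.2 hxL
    exact ⟨h, by rw [hfi x hxL]; exact hxC⟩
  set 𝒦 := CF.image AC with h𝒦
  have hinj : Set.InjOn AC CF := by
    intro C hC C' hC' heq
    by_contra hne
    obtain ⟨_, _, x, hxC, hxL⟩ := (hCFmem C).1 hC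
    have h1x : L.idxOf x ∈ AC C' := heq ▸ hidxAC C x hxL hxC
    rw [hACmem] at h1x
    have hxC' : x ∈ C' := by rw [← hfi x hxL]; exact h1x.2
    have hdis := h𝒞 ((hCFmem C).1 hC).1 ((hCFmem C').1 hC').1 hne
    exact Set.disjoint_left.1 hdis hxC hxC'
  have h𝒦card : 𝒦.card = k := by rw [h𝒦, Finset.card_image_of_injOn hinj, hCFcard]
  have hKne : ∀ A ∈ 𝒦, A.Nonempty := by
    intro A hA
    obtain ⟨C, hC, rfl⟩ := Finset.mem_image.1 hA
    obtain ⟨_, _, x, hxC, hxL⟩ := (hCFmem C).1 hC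
    exact ⟨L.idxOf x, hidxAC C x hxL hxC⟩
  have hKsub : ∀ A ∈ 𝒦, ∀ i ∈ A, i ≤ n := by
    intro A hA i hi
    obtain ⟨C, hC, rfl⟩ := Finset.mem_image.1 hA
    rw [hACmem] at hi
    omega
  have hKdisj : ∀ A ∈ 𝒦, ∀ B ∈ 𝒦, A ≠ B → Disjoint A B := by
    intro A hA B hB hne
    obtain ⟨C, hC, rfl⟩ := Finset.mem_image.1 hA
    obtain ⟨C', hC', rfl⟩ := Finset.mem_image.1 hB
    have hCne : C ≠ C' := fun h => hne (by rw [h])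
    have hdis := h𝒞 ((hCFmem C).1 hC).1 ((hCFmem C').1 hC').1 hCne
    rw [Finset.disjoint_left]
    intro i hiC hiC'
    rw [hACmem] at hiC hiC'
    exact Set.disjoint_left.1 hdis hiC.2 hiC'.2
  -- strips
  set SM : Set ((a : V) × (b : V) × G.Walk a b) :=
    {S ∈ 𝒮 | ∃ x : V, x ∈ S.2.2.support ∧ x ∈ ρ.support} with hSM
  have hSMfin : SM.Finite := h𝒮.subset (Set.sep_subset _ _)
  set T := hSMfin.toFinset with hT
  have hTmem : ∀ S, S ∈ T ↔ S ∈ 𝒮 ∧ ∃ x : V, x ∈ S.2.2.support ∧ x ∈ L := by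
    intro S; rw [hT, Set.Finite.mem_toFinset]; exact Iff.rfl
  have hTcard : 2 * T.card < k := by
    rw [hT, ← Set.ncard_eq_toFinset_card _ hSMfin]
    exact h4
  have hSpec : ∀ S : ((a : V) × (b : V) × G.Walk a b), ∃ p q : ℕ, S ∈ T →
      (p ≤ q ∧ q ≤ n ∧ ∀ x : V, (x ∈ S.2.2.support ∧ x ∈ L) ↔
        (x ∈ L ∧ p ≤ L.idxOf x ∧ L.idxOf x ≤ q)) := by
    intro S
    by_cases hS : S ∈ T
    · obtain ⟨hS𝒮, hSm⟩ := (hTmem S).1 hS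
      obtain ⟨l, hlne, hlinf, hliff⟩ := h1 S hS𝒮 hSm
      obtain ⟨t1, t2, hsplit⟩ := hlinf
      have hlpos : 0 < l.length := List.length_pos_iff.2 hlne
      have hdecomp : L = t1 ++ (l ++ t2) := by rw [← hsplit]; simp [List.append_assoc]
      have hlenL : L.length = t1.length + l.length + t2.length := by
        rw [hdecomp]; simp; ring
      refine ⟨t1.length, t1.length + l.length - 1, fun _ => ⟨by omega, by omega, ?_⟩⟩
      intro x
      rw [hliff x]
      rw [aux_mem hdecomp hnd x]
      constructor
      · rintro ⟨h1x, h2x, h3x⟩; exact ⟨h1x, h2x, by omega⟩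
      · rintro ⟨h1x, h2x, h3x⟩; exact ⟨h1x, h2x, by omega⟩
    · exact ⟨0, 0, fun h => absurd h hS⟩
  choose pp qq hPQ using hSpec
  have hIclean : ∀ S ∈ T, ∀ A ∈ 𝒦, ∀ i ∈ A, ¬(pp S ≤ i ∧ i ≤ qq S) := by
    rintro S hS A hA i hi ⟨hpi, hiq⟩
    obtain ⟨C, hC, rfl⟩ := Finset.mem_image.1 hA
    rw [hACmem] at hi
    obtain ⟨hiL, hfiC⟩ := hi
    obtain ⟨hpq, hqn, hiff⟩ := hPQ S hS
    have hfL : f i ∈ L := hfmem i hiL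
    have hsupp : f i ∈ S.2.2.support :=
      ((hiff (f i)).2 ⟨hfL, by rw [hif i hiL]; exact hpi, by rw [hif i hiL]; exact hiq⟩).1
    obtain ⟨hC𝒞, hclean, _⟩ := (hCFmem C).1 hC
    exact hclean S ((hTmem S).1 hS).1 (f i) hfiC hsupp
  -- condition (ii) transfer
  have hii : ∀ a b : ℕ, a ≤ b → b ≤ n → b - a ≤ d →
      (𝒦.filter fun A => ∃ i ∈ A, a ≤ i ∧ i ≤ b).card = m →
      m + 1 ≤ (T.filter fun S => pp S ≤ b ∧ a ≤ qq S).card := by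
    intro a b hab hbn hbd hcard
    by_contra hlt
    push_neg at hlt
    -- build the window list
    set l : List V := (L.drop a).take (b + 1 - a) with hl
    have hldecomp : L = L.take a ++ (l ++ L.drop (b + 1)) := by
      rw [hl]
      have h1' : (L.drop a).drop (b + 1 - a) = L.drop (b + 1) := by
        rw [List.drop_drop]
        congr 1
        omega
      rw [← h1']
      rw [List.take_append_drop, List.take_append_drop]
    have hllen : l.length = b + 1 - a := by
      rw [hl, List.length_take, List.length_drop]
      omega
    have hmeml : ∀ x, x ∈ l ↔ x ∈ L ∧ a ≤ L.idxOf x ∧ L.idxOf x ≤ b := by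
      intro x
      rw [aux_mem hldecomp hnd x]
      have h1' : (L.take a).length = a := by rw [List.length_take]; omega
      rw [h1', hllen]
      constructor
      · rintro ⟨u1, u2, u3⟩; exact ⟨u1, u2, by omega⟩
      · rintro ⟨u1, u2, u3⟩; exact ⟨u1, u2, by omega⟩
    have hlne : l ≠ [] := by
      intro h0
      have := hllen
      rw [h0] at this
      simp at this
      omega
    have hlinf : l <:+: L := ⟨L.take a, L.drop (b + 1), by rw [List.append_assoc, ← hldecomp]⟩
    -- strip count transfer
    have hstripset : {S ∈ 𝒮 | ∃ x : V, x ∈ S.2.2.support ∧ x ∈ l} =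
        ↑(T.filter fun S => pp S ≤ b ∧ a ≤ qq S) := by
      ext S
      simp only [Set.mem_setOf_eq, Finset.coe_filter, Finset.mem_coe]
      constructor
      · rintro ⟨hS𝒮, x, hxs, hxl⟩
        rw [hmeml] at hxl
        obtain ⟨hxL, hax, hxb⟩ := hxl
        have hST : S ∈ T := (hTmem S).2 ⟨hS𝒮, x, hxs, hxL⟩
        obtain ⟨hpq, hqn, hiff⟩ := hPQ S hST
        obtain ⟨_, hpx, hxq⟩ := (hiff x).1 ⟨hxs, hxL⟩
        exact ⟨hST, by omega, by omega⟩
      · rintro ⟨hST, hpb, haq⟩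
        obtain ⟨hpq, hqn, hiff⟩ := hPQ S hST
        set i := max a (pp S) with hi
        have hib : i ≤ b := by omega
        have hiq : i ≤ qq S := by omega
        have hiL : i < L.length := by omega
        have hfL : f i ∈ L := hfmem i hiL
        have hsupp : f i ∈ S.2.2.support :=
          ((hiff (f i)).2 ⟨hfL, by rw [hif i hiL]; omega, by rw [hif i hiL]; omega⟩).1
        have hfil : f i ∈ l := by
          rw [hmeml]
          exact ⟨hfL, by rw [hif i hiL]; omega, by rw [hif i hiL]; omega⟩
        exact ⟨((hTmem S).1 hST).1, f i, hsupp, hfil⟩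
    -- cluster count transfer
    have hclusset : {C ∈ 𝒞 | (∀ S ∈ 𝒮, ∀ x ∈ C, x ∉ S.2.2.support) ∧ ∃ x ∈ C, x ∈ l} =
        ↑(CF.filter fun C => ∃ x ∈ C, x ∈ l) := by
      ext C
      simp only [Set.mem_setOf_eq, Finset.coe_filter, Finset.mem_coe]
      constructor
      · rintro ⟨hC𝒞, hclean, x, hxC, hxl⟩
        have hxL : x ∈ L := ((hmeml x).1 hxl).1
        exact ⟨(hCFmem C).2 ⟨hC𝒞, hclean, x, hxC, hxL⟩, x, hxC, hxl⟩
      · rintro ⟨hCF', x, hxC, hxl⟩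
        obtain ⟨hC𝒞, hclean, _⟩ := (hCFmem C).1 hCF'
        exact ⟨hC𝒞, hclean, x, hxC, hxl⟩
    have himg : 𝒦.filter (fun A => ∃ i ∈ A, a ≤ i ∧ i ≤ b) =
        (CF.filter fun C => ∃ x ∈ C, x ∈ l).image AC := by
      ext A
      simp only [Finset.mem_filter, Finset.mem_image, h𝒦]
      constructor
      · rintro ⟨⟨C, hC, rfl⟩, i, hi, hai, hib⟩
        rw [hACmem] at hi
        refine ⟨C, ⟨hC, f i, hi.2, ?_⟩, rfl⟩
        rw [hmeml]
        exact ⟨hfmem i hi.1, by rw [hif i hi.1]; omega, by rw [hif i hi.1]; omega⟩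
      · rintro ⟨C, hC, rfl⟩
        obtain ⟨hC, x, hxC, hxl⟩ := hC
        rw [hmeml] at hxl
        obtain ⟨hxL, hax, hxb⟩ := hxl
        exact ⟨⟨C, hC, rfl⟩, L.idxOf x, hidxAC C x hxL hxC, hax, hxb⟩
    have hcard2 : (CF.filter fun C => ∃ x ∈ C, x ∈ l).card = m := by
      rw [← hcard, himg, Finset.card_image_of_injOn
        (hinj.mono (by exact_mod_cast Finset.filter_subset _ _))]
    refine h2 ⟨l, hlne, hlinf, ?_, ?_, ?_⟩
    · omega
    · rw [hstripset, Set.ncard_coe_finset]; omega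
    · rw [hclusset, Set.ncard_coe_finset]; exact hcard2
  -- apply the core lemma
  have hcore := core_lemma n d m hd hm T pp qq 𝒦 hKne hKsub hKdisj hIclean hii
    (by omega) (by omega)
  rw [h𝒦card] at hcore
  -- final arithmetic
  have hdist : (G.dist u v : ℝ) = (n : ℝ) := by rw [← hρ]
  rw [hdist]
  have hm' : (0 : ℝ) < (m : ℝ) := by exact_mod_cast hm
  rw [div_le_iff₀ hm']
  have hcast : (k : ℝ) * d ≤ 4 * m * n := by exact_mod_cast hcore
  nlinarith [hcast]
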